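/- For any self-dual complex two-form A on Minkowski space with invariant a (a² = (1/4)·tr(A·A)), one has exp(A) = cosh(a)·I + SH(a)·A. -/

import Mathlib

open Matrix

noncomputable section

/-- The Minkowski metric matrix `diag(1,-1,-1,-1)`. -/
def minkEta : Matrix (Fin 4) (Fin 4) ℂ := Matrix.diagonal ![1, -1, -1, -1]

/-- The Levi-Civita symbol `ε(i,j,k,l)`: the sign of `(i,j,k,l)` as a permutation of
`(0,1,2,3)`, and `0` if the indices are not all distinct; `ε(0,1,2,3) = 1`. -/
def eps (i j k l : Fin 4) : ℂ :=
  Matrix.det (Matrix.of ![Pi.single i 1, Pi.single j 1, Pi.single k 1, Pi.single l 1])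

/-- A (complex) two-form on Minkowski space: `Fᵀ·η + η·F = 0`. -/
def IsTwoForm (F : Matrix (Fin 4) (Fin 4) ℂ) : Prop :=
  Fᵀ * minkEta + minkEta * F = 0

/-- The Hodge dual of a two-form:
`(*F)^μ_ν = (1/2)·Σ η_{μρ}·ε(ρ,ν,σ,τ)·F^σ_λ·η_{λτ}`. -/
def dual (F : Matrix (Fin 4) (Fin 4) ℂ) : Matrix (Fin 4) (Fin 4) ℂ :=
  Matrix.of fun μ ν => (1/2 : ℂ) *
    ∑ ρ : Fin 4, ∑ σ : Fin 4, ∑ lam : Fin 4, ∑ τ : Fin 4,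
      minkEta μ ρ * eps ρ ν σ τ * F σ lam * minkEta lam τ

/-- A self-dual complex two-form: a two-form with `*A = i·A`. -/
def SelfDual (A : Matrix (Fin 4) (Fin 4) ℂ) : Prop :=
  IsTwoForm A ∧ dual A = Complex.I • A

/-- An anti-self-dual complex two-form: a two-form with `*A = -i·A`. -/
def AntiSelfDual (A : Matrix (Fin 4) (Fin 4) ℂ) : Prop :=
  IsTwoForm A ∧ dual A = (-Complex.I) • A

/-- A matrix with real entries. -/
def RealEntries (F : Matrix (Fin 4) (Fin 4) ℂ) : Prop :=
  ∀ i j, (F i j).im = 0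

/-- `SH z = sinh z / z` for `z ≠ 0` and `SH 0 = 1`. -/
def SH (z : ℂ) : ℂ := if z = 0 then 1 else Complex.sinh z / z

set_option maxHeartbeats 1000000 in
/-- If `M² = a²·1` then `exp M = cosh a • 1 + SH a • M`. -/
lemma exp_of_sq (M : Matrix (Fin 4) (Fin 4) ℂ) (a : ℂ)
    (h : M * M = a ^ 2 • (1 : Matrix (Fin 4) (Fin 4) ℂ)) :
    NormedSpace.exp M = Complex.cosh a • (1 : Matrix (Fin 4) (Fin 4) ℂ) + SH a • M := by
  have h2 : M ^ 2 = a ^ 2 • (1 : Matrix (Fin 4) (Fin 4) ℂ) := by rw [sq, h]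
  have heven : ∀ n : ℕ, M ^ (2 * n) = a ^ (2 * n) • (1 : Matrix (Fin 4) (Fin 4) ℂ) := by
    intro n
    induction n with
    | zero => simp
    | succ n ih =>
      rw [mul_add, mul_one, pow_add, pow_add, ih, h2, smul_mul_smul_comm, one_mul]
  have hodd : ∀ n : ℕ, M ^ (2 * n + 1) = a ^ (2 * n) • M := by
    intro n
    rw [pow_succ, heven n, smul_mul_assoc, one_mul]
  have hc : HasSum (fun n : ℕ => ((2 * n).factorial : ℂ)⁻¹ • M ^ (2 * n))
      (Complex.cosh a • (1 : Matrix (Fin 4) (Fin 4) ℂ)) := by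
    have := (Complex.hasSum_cosh a).smul_const (1 : Matrix (Fin 4) (Fin 4) ℂ)
    convert this using 2 with n
    rw [heven, smul_smul, div_eq_inv_mul]
  have hs : HasSum (fun n : ℕ => ((2 * n + 1).factorial : ℂ)⁻¹ • M ^ (2 * n + 1)) (SH a • M) := by
    rcases eq_or_ne a 0 with rfl | hne
    · have hz : ∀ n : ℕ, n ≠ 0 → ((2 * n + 1).factorial : ℂ)⁻¹ • M ^ (2 * n + 1) = 0 := by
        intro n hn
        rw [hodd, zero_pow (by omega), zero_smul, smul_zero]
      have h0 := hasSum_single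
        (f := fun n : ℕ => ((2 * n + 1).factorial : ℂ)⁻¹ • M ^ (2 * n + 1)) 0 hz
      simpa [SH] using h0
    · have := ((Complex.hasSum_sinh a).div_const a).smul_const M
      have key : (fun n : ℕ => ((2 * n + 1).factorial : ℂ)⁻¹ • M ^ (2 * n + 1)) =
          fun n : ℕ => (a ^ (2 * n + 1) / ((2 * n + 1).factorial : ℂ) / a) • M := by
        funext n
        rw [hodd, smul_smul]
        congr 1
        have hf : ((2 * n + 1).factorial : ℂ) ≠ 0 := Nat.cast_ne_zero.mpr (Nat.factorial_ne_zero _)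
        field_simp
        ring
      rw [key, SH, if_neg hne]
      exact this
  have hsum : HasSum (fun n : ℕ => ((n.factorial : ℂ))⁻¹ • M ^ n)
      (Complex.cosh a • (1 : Matrix (Fin 4) (Fin 4) ℂ) + SH a • M) :=
    HasSum.even_add_odd (f := fun n : ℕ => ((n.factorial : ℂ))⁻¹ • M ^ n) hc hs
  rw [NormedSpace.exp_eq_tsum (𝕂 := ℂ)]
  exact hsum.tsum_eq

set_option maxHeartbeats 4000000 in
/-- Exponential of a self-dual two-form `A` with invariant `a`:
`exp A = cosh(a)·I + SH(a)·A`. -/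
theorem selfDual_exp (A : Matrix (Fin 4) (Fin 4) ℂ) (hA : SelfDual A)
    (a : ℂ) (ha : a ^ 2 = (1/4 : ℂ) * Matrix.trace (A * A)) :
    NormedSpace.exp A = Complex.cosh a • (1 : Matrix (Fin 4) (Fin 4) ℂ) + SH a • A := by
  obtain ⟨hT, hD⟩ := hA
  have tf : ∀ μ ν : Fin 4, (Aᵀ * minkEta + minkEta * A) μ ν = 0 := by
    intro μ ν; rw [hT]; rfl
  have t00 := tf 0 0; have t11 := tf 1 1; have t22 := tf 2 2; have t33 := tf 3 3
  have t01 := tf 0 1; have t02 := tf 0 2; have t03 := tf 0 3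
  have t12 := tf 1 2; have t13 := tf 1 3; have t23 := tf 2 3
  set_option maxRecDepth 10000 in
  norm_num [Matrix.mul_apply, Matrix.add_apply, Matrix.transpose_apply, minkEta,
    Matrix.diagonal_apply, Fin.sum_univ_four, Matrix.cons_val_one, Matrix.cons_val_two,
    Matrix.cons_val_three,
    show ((3:Fin 4):ℕ) = 3 from rfl, show ((2:Fin 4):ℕ) = 2 from rfl,
    show ((1:Fin 4):ℕ) = 1 from rfl, show ((0:Fin 4):ℕ) = 0 from rfl]
    at t00 t11 t22 t33 t01 t02 t03 t12 t13 t23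
  have h23 := congrFun (congrFun hD 2) 3
  have h13 := congrFun (congrFun hD 1) 3
  have h12 := congrFun (congrFun hD 1) 2
  set_option maxRecDepth 10000 in
  simp [dual, minkEta, Matrix.diagonal, Fin.sum_univ_four, eps, Matrix.det_succ_row_zero,
    Fin.sum_univ_succ, Pi.single_apply, Fin.succAbove,
    show (Fin.succ 2 : Fin 4) = 3 from rfl, show ((3:Fin 4):ℕ) = 3 from rfl,
    Matrix.cons_val_one] at h23 h13 h12
  -- h23 : 1 / 2 * (A 0 1 + A 1 0) = Complex.I * A 2 3
  -- h13 : 1 / 2 * (-A 0 2 + -A 2 0) = Complex.I * A 1 3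
  -- h12 : 1 / 2 * (A 0 3 + A 3 0) = Complex.I * A 1 2
  have s1 : A 1 0 = A 0 1 := by linear_combination -t01
  have s2 : A 2 0 = A 0 2 := by linear_combination -t02
  have s3 : A 3 0 = A 0 3 := by linear_combination -t03
  have b1 : A 2 3 = -Complex.I * A 0 1 := by
    linear_combination Complex.I * h23 - (Complex.I/2) * s1 + A 2 3 * Complex.I_sq
  have b2 : A 1 3 = Complex.I * A 0 2 := by
    linear_combination Complex.I * h13 + (Complex.I/2) * s2 + A 1 3 * Complex.I_sq
  have b3 : A 1 2 = -Complex.I * A 0 3 := by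
    linear_combination Complex.I * h12 - (Complex.I/2) * s3 + A 1 2 * Complex.I_sq
  have b1' : A 3 2 = Complex.I * A 0 1 := by linear_combination -t23 - b1
  have b2' : A 3 1 = -Complex.I * A 0 2 := by linear_combination -t13 - b2
  have b3' : A 2 1 = Complex.I * A 0 3 := by linear_combination -t12 - b3
  set E1 := A 0 1 with hE1
  set E2 := A 0 2 with hE2
  set E3 := A 0 3 with hE3
  have hAA : A * A = (E1 ^ 2 + E2 ^ 2 + E3 ^ 2) • (1 : Matrix (Fin 4) (Fin 4) ℂ) := by
    ext i j
    fin_cases i <;> fin_cases j <;>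
      simp only [Fin.mk_zero, Fin.mk_one, show (⟨2, by omega⟩ : Fin 4) = 2 from rfl,
        show (⟨3, by omega⟩ : Fin 4) = 3 from rfl] <;>
      simp only [Matrix.mul_apply, Fin.sum_univ_four, Matrix.smul_apply, Matrix.one_apply,
        smul_eq_mul, t00, t11, t22, t33, s1, s2, s3, b1, b2, b3, b1, b2, b3, b1', b2', b3',
        ← hE1, ← hE2, ← hE3] <;>
      norm_num [Fin.ext_iff, show ((3:Fin 4):ℕ) = 3 from rfl, show ((2:Fin 4):ℕ) = 2 from rfl,
        show ((1:Fin 4):ℕ) = 1 from rfl, show ((0:Fin 4):ℕ) = 0 from rfl]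
    all_goals (first
      | ring1
      | linear_combination (E1 * E2) * Complex.I_sq
      | linear_combination (E1 * E3) * Complex.I_sq
      | linear_combination (E2 * E3) * Complex.I_sq
      | linear_combination (-(E2 ^ 2 + E3 ^ 2)) * Complex.I_sq
      | linear_combination (-(E1 ^ 2 + E3 ^ 2)) * Complex.I_sq
      | linear_combination (-(E1 ^ 2 + E2 ^ 2)) * Complex.I_sq)
  have hc : a ^ 2 = E1 ^ 2 + E2 ^ 2 + E3 ^ 2 := by
    rw [ha, hAA, Matrix.trace_smul, Matrix.trace_one]
    norm_num [Fintype.card_fin]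
    try ring
  exact exp_of_sq A a (by rw [hAA, hc])
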